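/- Let E be an n×n real matrix and let A = I + (p-2)vvᵀ for a unit vector v ∈ ℝⁿ and p > 1. If EA = AEᵀ, then trace(E²) ≥ (2(p-1)/(1+(p-1)²))·‖E‖², where ‖E‖² denotes the squared Frobenius norm trace(EEᵀ). -/
import Mathlib


open Matrix

/-- If `E * A = A * Eᵀ` for `A = I + (p-2) v vᵀ` with `v` a unit vector and
`p > 1`, then `trace (E²) ≥ (2(p-1)/(1+(p-1)²)) ‖E‖²` with `‖E‖² = trace (E Eᵀ)`. -/
theorem trace_sq_ge_of_selfdual (n : ℕ) (p : ℝ) (hp : 1 < p)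
    (v : Fin n → ℝ) (hv : v ⬝ᵥ v = 1)
    (E : Matrix (Fin n) (Fin n) ℝ)
    (hEA : E * ((1 : Matrix (Fin n) (Fin n) ℝ) + (p - 2) • vecMulVec v v)
        = ((1 : Matrix (Fin n) (Fin n) ℝ) + (p - 2) • vecMulVec v v) * Eᵀ) :
    (E * E).trace ≥ (2 * (p - 1) / (1 + (p - 1) ^ 2)) * (E * Eᵀ).trace := by
  classical
  have hv1 : ∑ i, v i * v i = 1 := hv
  set u : Fin n → ℝ := fun i => ∑ k, E i k * v k with hu
  have hu' : ∀ i, u i = ∑ k, E i k * v k := fun i => rfl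
  set α : ℝ := ∑ i, u i * v i with hα
  set U : ℝ := ∑ i, u i * u i with hU
  have hα' : ∑ i, v i * u i = α := by
    rw [hα]; exact Finset.sum_congr rfl fun i _ => mul_comm _ _
  set t : Fin n → ℝ := fun i => (p * u i - (p-2) * α * v i)/2 with ht
  have ht' : ∀ i, t i = (p * u i - (p-2) * α * v i)/2 := fun i => rfl
  set S : Fin n → Fin n → ℝ := fun i j => (E i j + E j i)/2 with hS
  have hS' : ∀ i j, S i j = (E i j + E j i)/2 := fun i j => rfl
  set T : Fin n → Fin n → ℝ :=
    fun i j => S i j - v i * t j - t i * v j + α * (v i * v j) with hT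
  have hT' : ∀ i j, T i j = S i j - v i * t j - t i * v j + α * (v i * v j) :=
    fun i j => rfl
  -- generic splitters
  have hsum3 : ∀ (c1 c2 c3 : ℝ) (f1 f2 f3 : Fin n → ℝ),
      ∑ i, (c1 * f1 i + c2 * f2 i + c3 * f3 i)
        = c1 * (∑ i, f1 i) + c2 * (∑ i, f2 i) + c3 * (∑ i, f3 i) := by
    intros c1 c2 c3 f1 f2 f3
    rw [Finset.sum_add_distrib, Finset.sum_add_distrib,
      ← Finset.mul_sum, ← Finset.mul_sum, ← Finset.mul_sum]
  have hsum4 : ∀ (c1 c2 c3 c4 : ℝ) (f1 f2 f3 f4 : Fin n → ℝ),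
      ∑ i, (c1 * f1 i + c2 * f2 i + c3 * f3 i + c4 * f4 i)
        = c1 * (∑ i, f1 i) + c2 * (∑ i, f2 i) + c3 * (∑ i, f3 i) + c4 * (∑ i, f4 i) := by
    intros c1 c2 c3 c4 f1 f2 f3 f4
    rw [Finset.sum_add_distrib, Finset.sum_add_distrib, Finset.sum_add_distrib,
      ← Finset.mul_sum, ← Finset.mul_sum, ← Finset.mul_sum, ← Finset.mul_sum]
  have hsum6 : ∀ (c1 c2 c3 c4 c5 c6 : ℝ) (f1 f2 f3 f4 f5 f6 : Fin n → ℝ),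
      ∑ i, (c1 * f1 i + c2 * f2 i + c3 * f3 i + c4 * f4 i + c5 * f5 i + c6 * f6 i)
        = c1 * (∑ i, f1 i) + c2 * (∑ i, f2 i) + c3 * (∑ i, f3 i) + c4 * (∑ i, f4 i)
          + c5 * (∑ i, f5 i) + c6 * (∑ i, f6 i) := by
    intros c1 c2 c3 c4 c5 c6 f1 f2 f3 f4 f5 f6
    rw [Finset.sum_add_distrib, Finset.sum_add_distrib, Finset.sum_add_distrib,
      Finset.sum_add_distrib, Finset.sum_add_distrib,
      ← Finset.mul_sum, ← Finset.mul_sum, ← Finset.mul_sum, ← Finset.mul_sum,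
      ← Finset.mul_sum, ← Finset.mul_sum]
  -- F1 : antisymmetric part of E
  have hF1 : ∀ i j, E i j - E j i = (p-2) * (v i * u j - u i * v j) := by
    rw [Matrix.mul_add, Matrix.add_mul, Matrix.mul_one, Matrix.one_mul,
      Matrix.mul_smul, Matrix.smul_mul] at hEA
    intro i j
    have h := congrFun (congrFun hEA i) j
    simp only [Matrix.add_apply, Matrix.smul_apply, Matrix.mul_apply, vecMulVec_apply,
      Matrix.transpose_apply, smul_eq_mul] at h
    have h1 : ∑ k, E i k * (v k * v j) = (∑ k, E i k * v k) * v j := by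
      rw [Finset.sum_mul]; exact Finset.sum_congr rfl fun k _ => by ring
    have h2 : ∑ k, v i * v k * E j k = v i * (∑ k, E j k * v k) := by
      rw [Finset.mul_sum]; exact Finset.sum_congr rfl fun k _ => by ring
    rw [h1, h2] at h
    rw [hu' i, hu' j]
    linarith
  -- F2 : S v = t
  have hF2 : ∀ i, ∑ j, S i j * v j = t i := by
    intro i
    have e1 : ∀ j, S i j * v j
        = 1 * (E i j * v j) + (-(p-2)/2 * v i) * (u j * v j) + ((p-2)/2 * u i) * (v j * v j) := by
      intro j
      rw [hS' i j]
      linear_combination (-(v j)/2) * hF1 i j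
    rw [Finset.sum_congr rfl fun j _ => e1 j, hsum3, ← hu' i, ← hα, hv1, ht' i]
    ring
  have hF2' : ∀ j, ∑ i, S i j * v i = t j := by
    intro j
    have : ∀ i, S i j * v i = S j i * v i := fun i => by rw [hS' i j, hS' j i]; ring
    rw [Finset.sum_congr rfl fun i _ => this i]
    exact hF2 j
  -- F3
  have hF3 : ∑ i, t i * v i = α := by
    have e1 : ∀ i, t i * v i
        = (p/2) * (u i * v i) + (-(p-2)/2 * α) * (v i * v i) + 0 * (v i * v i) := by
      intro i; rw [ht' i]; ring
    rw [Finset.sum_congr rfl fun i _ => e1 i, hsum3, ← hα, hv1]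
    ring
  -- F4 : sum of t²
  set TT : ℝ := ∑ i, t i * t i with hTT
  have hF4 : TT = p^2/4 * U - (p*(p-2)/2) * α^2 + (p-2)^2/4 * α^2 := by
    have e1 : ∀ i, t i * t i = p^2/4 * (u i * u i) + (-(p*(p-2))/2*α) * (u i * v i)
        + ((p-2)^2/4*α^2) * (v i * v i) := by
      intro i; rw [ht' i]; ring
    rw [hTT, Finset.sum_congr rfl fun i _ => e1 i, hsum3, ← hα, ← hU, hv1]
    ring
  -- row kill for T
  have hF5a : ∀ i, ∑ j, T i j * v j = 0 := by
    intro i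
    have e1 : ∀ j, T i j * v j = 1 * (S i j * v j) + (-(v i)) * (t j * v j)
        + (α * v i - t i) * (v j * v j) := by
      intro j; rw [hT' i j]; ring
    rw [Finset.sum_congr rfl fun j _ => e1 j, hsum3, hF2 i, hF3, hv1]
    ring
  have hTsymm : ∀ i j, T i j = T j i := by
    intro i j; rw [hT' i j, hT' j i, hS' i j, hS' j i]; ring
  have hF5b : ∀ j, ∑ i, T i j * v i = 0 := by
    intro j
    rw [Finset.sum_congr rfl fun i _ => by rw [hTsymm i j]]
    exact hF5a j
  set SS : ℝ := ∑ i, ∑ j, S i j * S i j with hSS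
  set TSQ : ℝ := ∑ i, ∑ j, T i j * T i j with hTSQ
  -- auxiliary swapped sums
  have hswapT : ∑ i, ∑ j, v i * (T i j * t j) = 0 := by
    rw [Finset.sum_comm]
    have : ∀ j, ∑ i, v i * (T i j * t j) = t j * ∑ i, T i j * v i := by
      intro j; rw [Finset.mul_sum]; exact Finset.sum_congr rfl fun i _ => by ring
    rw [Finset.sum_congr rfl fun j _ => this j]
    simp [hF5b]
  have hswapS : ∑ i, ∑ j, v i * (S i j * t j) = TT := by
    rw [Finset.sum_comm]
    have : ∀ j, ∑ i, v i * (S i j * t j) = t j * ∑ i, S i j * v i := by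
      intro j; rw [Finset.mul_sum]; exact Finset.sum_congr rfl fun i _ => by ring
    rw [Finset.sum_congr rfl fun j _ => this j, hTT]
    exact Finset.sum_congr rfl fun j _ => by rw [hF2' j]
  have hswapSu : ∑ i, ∑ j, v i * (S i j * u j) = ∑ i, u i * t i := by
    rw [Finset.sum_comm]
    have : ∀ j, ∑ i, v i * (S i j * u j) = u j * ∑ i, S i j * v i := by
      intro j; rw [Finset.mul_sum]; exact Finset.sum_congr rfl fun i _ => by ring
    rw [Finset.sum_congr rfl fun j _ => this j]
    exact Finset.sum_congr rfl fun j _ => by rw [hF2' j]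
  -- F5 : ∑∑ T² = SS - 2 TT + α²
  have hF5 : TSQ = SS - 2 * TT + α^2 := by
    have step1 : TSQ = ∑ i, ∑ j, T i j * S i j := by
      rw [hTSQ]
      have e1 : ∀ i, ∑ j, T i j * T i j
          = (∑ j, T i j * S i j) - v i * (∑ j, T i j * t j) := by
        intro i
        have e2 : ∀ j, T i j * T i j = 1 * (T i j * S i j) + (-(v i)) * (T i j * t j)
            + (α * v i - t i) * (T i j * v j) := by
          intro j; nth_rewrite 2 [hT' i j]; ring
        rw [Finset.sum_congr rfl fun j _ => e2 j, hsum3, hF5a i]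
        ring
      rw [Finset.sum_congr rfl fun i _ => e1 i, Finset.sum_sub_distrib]
      have : ∑ i, v i * (∑ j, T i j * t j) = ∑ i, ∑ j, v i * (T i j * t j) :=
        Finset.sum_congr rfl fun i _ => Finset.mul_sum _ _ _
      rw [this, hswapT]
      ring
    rw [step1]
    have e1 : ∀ i, ∑ j, T i j * S i j
        = (∑ j, S i j * S i j) - v i * (∑ j, S i j * t j) + (α * (v i * t i) - t i * t i) := by
      intro i
      have e2 : ∀ j, T i j * S i j = 1 * (S i j * S i j) + (-(v i)) * (S i j * t j)
          + (α * v i - t i) * (S i j * v j) := by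
        intro j; rw [hT' i j]; ring
      rw [Finset.sum_congr rfl fun j _ => e2 j, hsum3, hF2 i]
      ring
    rw [Finset.sum_congr rfl fun i _ => e1 i, Finset.sum_add_distrib, Finset.sum_sub_distrib]
    have h1 : ∑ i, v i * (∑ j, S i j * t j) = ∑ i, ∑ j, v i * (S i j * t j) :=
      Finset.sum_congr rfl fun i _ => Finset.mul_sum _ _ _
    have h2 : ∑ i, (α * (v i * t i) - t i * t i) = α * (∑ i, t i * v i) - TT := by
      have e3 : ∀ i, α * (v i * t i) - t i * t i = α * (t i * v i) - t i * t i :=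
        fun i => by ring
      rw [Finset.sum_congr rfl fun i _ => e3 i, Finset.sum_sub_distrib,
        ← Finset.mul_sum, hTT]
    rw [h1, hswapS, h2, hF3, ← hSS]
    ring
  -- trace formulas
  set P : ℝ := ∑ i, ∑ j, E i j * E j i with hP
  set Q : ℝ := ∑ i, ∑ j, E i j * E i j with hQ
  have hPtr : (E * E).trace = P := by
    rw [hP]; simp [Matrix.trace, Matrix.diag, Matrix.mul_apply]
  have hQtr : (E * Eᵀ).trace = Q := by
    rw [hQ]; simp [Matrix.trace, Matrix.diag, Matrix.mul_apply, Matrix.transpose_apply]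
  -- P in terms of SS, U, α
  have hPval : P = SS - (p-2)^2/2 * U + (p-2)^2/2 * α^2 := by
    have e1 : ∀ i, ∑ j, E i j * E j i
        = 1 * (∑ j, S i j * S i j) + (-(p-2)^2/4*U) * (v i * v i)
          + ((p-2)^2/2*α) * (v i * u i) + (-(p-2)^2/4) * (u i * u i) := by
      intro i
      have e2 : ∀ j, E i j * E j i = 1 * (S i j * S i j)
          + (-(p-2)^2/4*(v i * v i)) * (u j * u j)
          + ((p-2)^2/2*(v i * u i)) * (u j * v j)
          + (-(p-2)^2/4*(u i * u i)) * (v j * v j) := by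
        intro j
        rw [hS' i j]
        linear_combination (-(1:ℝ)/4 * (E i j - E j i + (p-2)*(v i * u j - u i * v j))) * hF1 i j
      rw [Finset.sum_congr rfl fun j _ => e2 j, hsum4, ← hα, ← hU, hv1]
      ring
    rw [hP, Finset.sum_congr rfl fun i _ => e1 i, hsum4, hα', ← hSS, hv1, ← hU]
    ring
  -- Q in terms of SS, U, α
  have hQval : Q = SS + (p-2)^2/2 * U - (p-2)^2/2 * α^2 := by
    have e1 : ∀ i, ∑ j, E i j * E i j
        = 1 * (∑ j, S i j * S i j) + ((p-2)) * (v i * (∑ j, S i j * u j))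
          + (-(p-2)) * (u i * t i) + ((p-2)^2/4*U) * (v i * v i)
          + (-(p-2)^2/2*α) * (v i * u i) + ((p-2)^2/4) * (u i * u i) := by
      intro i
      have e2 : ∀ j, E i j * E i j = 1 * (S i j * S i j)
          + ((p-2)*(v i)) * (S i j * u j)
          + (-(p-2)*(u i)) * (S i j * v j)
          + ((p-2)^2/4*(v i * v i)) * (u j * u j)
          + (-(p-2)^2/2*(v i * u i)) * (u j * v j)
          + ((p-2)^2/4*(u i * u i)) * (v j * v j) := by
        intro j
        rw [hS' i j]
        linear_combination ((E i j + E j i)/2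
          + (E i j - E j i + (p-2)*(v i * u j - u i * v j))/4) * hF1 i j
      rw [Finset.sum_congr rfl fun j _ => e2 j, hsum6, ← hα, ← hU, hv1, hF2 i]
      ring
    rw [hQ, Finset.sum_congr rfl fun i _ => e1 i, hsum6]
    have h1 : ∑ i, v i * (∑ j, S i j * u j) = ∑ i, ∑ j, v i * (S i j * u j) :=
      Finset.sum_congr rfl fun i _ => Finset.mul_sum _ _ _
    rw [h1, hswapSu, hα', ← hSS, hv1, ← hU]
    ring
  -- assemble
  have hSSval : SS = TSQ + 2 * TT - α^2 := by linarith [hF5]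
  have key : P * (1 + (p-1)^2) - 2*(p-1) * Q = (p-2)^2 * (TSQ + α^2) := by
    rw [hPval, hQval, hSSval, hF4]; ring
  have hTSQnn : 0 ≤ TSQ := by
    rw [hTSQ]
    exact Finset.sum_nonneg fun i _ => Finset.sum_nonneg fun j _ => mul_self_nonneg _
  have hD : (0:ℝ) < 1 + (p-1)^2 := by positivity
  rw [ge_iff_le, hPtr, hQtr, div_mul_eq_mul_div, div_le_iff₀ hD]
  have hnn : 0 ≤ (p-2)^2 * (TSQ + α^2) :=
    mul_nonneg (sq_nonneg _) (add_nonneg hTSQnn (sq_nonneg _))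
  linarith [key, hnn]
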